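/- Let 𝕜 be ℝ or ℂ, H a Hilbert space over 𝕜 whose inner product ⟪·,·⟫ is linear in the first argument, S a nonempty set, Φ : S → H a map, and define k(s,s₀) := ⟪Φ s₀, Φ s⟫. Let n ≥ 1, s₁,…,sₙ ∈ S and y₁,…,yₙ ∈ 𝕜. Then there exists g ∈ H with ⟪g, Φ sᵢ⟫ = yᵢ for all i if and only if there exists γ ∈ 𝕜ⁿ with Σⱼ k(sᵢ,sⱼ) γⱼ = yᵢ for all i. Moreover, for any such γ, the element g₀ := Σⱼ γⱼ · Φ sⱼ satisfies ⟪g₀, Φ sᵢ⟫ = yᵢ for all i, and for every h ∈ H with ⟪h, Φ sᵢ⟫ = yᵢ for all i one has ‖g₀‖ ≤ ‖h‖, with equality only if h = g₀ (i.e., g₀ is the unique minimum-norm interpolant). -/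

import Mathlib

open scoped BigOperators

/-- **Minimum-norm interpolation in an RKHS (feature-map form).**
The paper's inner product `⟪a, b⟫` is linear in the *first* argument, hence equals
Mathlib's `inner b a`.  Evaluation of `g` at `s` is `⟪g, Φ s⟫ = inner 𝕜 (Φ s) g`, and the
kernel is `k s s₀ = ⟪Φ s₀, Φ s⟫ = inner 𝕜 (Φ s) (Φ s₀)`. -/
theorem stmt0 {𝕜 : Type*} [RCLike 𝕜] {H : Type*} [NormedAddCommGroup H]
    [InnerProductSpace 𝕜 H] {S : Type*} [Nonempty S] (Φ : S → H)
    (k : S → S → 𝕜) (hk : ∀ s s₀, k s s₀ = inner 𝕜 (Φ s) (Φ s₀))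
    (n : ℕ) (hn : 1 ≤ n) (s : Fin n → S) (y : Fin n → 𝕜) :
    ((∃ g : H, ∀ i, (inner 𝕜 (Φ (s i)) g : 𝕜) = y i) ↔
      ∃ γ : Fin n → 𝕜, ∀ i, ∑ j, k (s i) (s j) * γ j = y i) ∧
    ∀ γ : Fin n → 𝕜, (∀ i, ∑ j, k (s i) (s j) * γ j = y i) →
      ∀ g₀ : H, g₀ = ∑ j, γ j • Φ (s j) →
        (∀ i, (inner 𝕜 (Φ (s i)) g₀ : 𝕜) = y i) ∧
        ∀ h : H, (∀ i, (inner 𝕜 (Φ (s i)) h : 𝕜) = y i) →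
          ‖g₀‖ ≤ ‖h‖ ∧ (‖g₀‖ = ‖h‖ → h = g₀) := by
  have key : ∀ γ : Fin n → 𝕜, ∀ i,
      (inner 𝕜 (Φ (s i)) (∑ j, γ j • Φ (s j)) : 𝕜) = ∑ j, k (s i) (s j) * γ j := by
    intro γ i
    rw [inner_sum]
    refine Finset.sum_congr rfl fun j _ => ?_
    rw [inner_smul_right, hk, mul_comm]
  constructor
  · constructor
    · rintro ⟨g, hg⟩
      set K : Submodule 𝕜 H := Submodule.span 𝕜 (Set.range fun j => Φ (s j)) with hK
      haveI : FiniteDimensional 𝕜 K :=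
        FiniteDimensional.span_of_finite 𝕜 (Set.finite_range _)
      set p : H := (Submodule.orthogonalProjection K g : H) with hp
      have hpmem : p ∈ K := (Submodule.orthogonalProjection K g).2
      obtain ⟨γ, hγ⟩ := Submodule.mem_span_range_iff_exists_fun 𝕜 |>.mp hpmem
      refine ⟨γ, fun i => ?_⟩
      have hmem : Φ (s i) ∈ K := Submodule.subset_span ⟨i, rfl⟩
      have h0 : (inner 𝕜 (g - p) (Φ (s i)) : 𝕜) = 0 :=
        Submodule.starProjection_inner_eq_zero (K := K) g (Φ (s i)) hmem
      have h1 : (inner 𝕜 (Φ (s i)) (g - p) : 𝕜) = 0 := by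
        rw [← inner_conj_symm, h0, map_zero]
      rw [inner_sub_right, sub_eq_zero] at h1
      calc ∑ j, k (s i) (s j) * γ j = inner 𝕜 (Φ (s i)) (∑ j, γ j • Φ (s j)) := (key γ i).symm
        _ = inner 𝕜 (Φ (s i)) p := by rw [hγ]
        _ = inner 𝕜 (Φ (s i)) g := h1.symm
        _ = y i := hg i
    · rintro ⟨γ, hγ⟩
      exact ⟨∑ j, γ j • Φ (s j), fun i => (key γ i).trans (hγ i)⟩
  · intro γ hγ g₀ hg₀
    have hint : ∀ i, (inner 𝕜 (Φ (s i)) g₀ : 𝕜) = y i := by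
      intro i; rw [hg₀]; exact (key γ i).trans (hγ i)
    refine ⟨hint, fun h hh => ?_⟩
    have hz : ∀ j, (inner 𝕜 (Φ (s j)) (h - g₀) : 𝕜) = 0 := by
      intro j; rw [inner_sub_right, hh, hint, sub_self]
    have horth : (inner 𝕜 (h - g₀) g₀ : 𝕜) = 0 := by
      nth_rewrite 2 [hg₀]
      rw [inner_sum]
      refine Finset.sum_eq_zero fun j _ => ?_
      rw [inner_smul_right, ← inner_conj_symm, hz j, map_zero, mul_zero]
    have hpyth : ‖h‖ ^ 2 = ‖g₀‖ ^ 2 + ‖h - g₀‖ ^ 2 := by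
      have := @norm_add_sq 𝕜 H _ _ _ g₀ (h - g₀)
      rw [add_sub_cancel] at this
      rw [this, ← inner_conj_symm, horth, map_zero, RCLike.zero_re, mul_zero]
      ring
    have hle : ‖g₀‖ ≤ ‖h‖ := by
      nlinarith [norm_nonneg g₀, norm_nonneg h, sq_nonneg ‖h - g₀‖]
    refine ⟨hle, fun heq => ?_⟩
    have h2 : ‖h - g₀‖ ^ 2 = 0 := by rw [heq] at hpyth; linarith
    have : ‖h - g₀‖ = 0 := pow_eq_zero_iff two_ne_zero |>.mp h2
    exact sub_eq_zero.mp (norm_eq_zero.mp this)
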